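/- Let U = (U_i)_{i∈I} be a moderate admissible covering of X, w a continuous weight whose associated weight m := m_w is admissible and satisfies the m-cover condition for U, fix z ∈ X and set v := m(·,z), ṽ(i) := sup_{x∈U_i} v(x) and r(i) := ṽ(i)·μ(U_i). Then for each 1 ≤ p ≤ ∞ there exists a constant C such that for every sequence (λ_i)_{i∈I} of nonnegative reals and every k ∈ I: λ_k ≤ C · r(k) · ‖Σ_{i∈I} λ_i μ(U_i)^{-1} χ_{U_i}‖_{L^p_w}; that is, the sequence space (L^p_w)^♮(U) embeds continuously into ℓ^∞_{1/r}(I). -/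

import Mathlib

open MeasureTheory ENNReal
open scoped ENNReal NNReal

noncomputable section

/-- The weight on `X × X` associated to a weight `w` on `X`. -/
def mw {X : Type*} (w : X → ℝ) (x y : X) : ℝ :=
  max (w x / w y) (w y / w x)

/-- A moderate admissible covering `U = (U_i)_{i∈I}` of `X`. -/
structure ModCover (X : Type*) [TopologicalSpace X] [MeasurableSpace X]
    (μ : MeasureTheory.Measure X) (I : Type*) where
  U : I → Set X
  measU : ∀ i, MeasurableSet (U i)
  relCompact : ∀ i, IsCompact (closure (U i))
  interiorNonempty : ∀ i, (interior (U i)).Nonempty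
  covers : (⋃ i, U i) = Set.univ
  N : ℕ
  overlapFin : ∀ j : I, {i : I | (U i ∩ U j).Nonempty}.Finite
  overlapBound : ∀ j : I, {i : I | (U i ∩ U j).Nonempty}.ncard ≤ N
  measLower : ℝ≥0∞
  measLowerPos : 0 < measLower
  lower : ∀ i, measLower ≤ μ (U i)
  finiteMeas : ∀ i, μ (U i) < ⊤
  Ctilde : ℝ≥0∞
  CtildeFin : Ctilde < ⊤
  moderate : ∀ i j, (U i ∩ U j).Nonempty → μ (U i) ≤ Ctilde * μ (U j)

/-- The sequence space `(L^p_w)^♮(U)` embeds continuously into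
`ℓ^∞_{1/r}(I)`, where `r(i) = ṽ(i)·μ(U_i)` and `ṽ(i) = sup_{x∈U_i} v(x)`, `v = m(·,z)`. -/
theorem Ynatural_embeds_linfty
    {X : Type*} [TopologicalSpace X] [T2Space X] [LocallyCompactSpace X]
    [SigmaCompactSpace X] [MeasurableSpace X] [BorelSpace X]
    (μ : MeasureTheory.Measure X) [μ.Regular] [μ.IsOpenPosMeasure]
    {I : Type*} [Countable I]
    (𝒰 : ModCover X μ I)
    (w : X → ℝ) (hw : Continuous w) (hwpos : ∀ x, 0 < w x)
    (CmU : ℝ) (hcover : ∀ i, ∀ x ∈ 𝒰.U i, ∀ y ∈ 𝒰.U i, mw w x y ≤ CmU)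
    (z : X) :
    ∀ p : ℝ≥0∞, 1 ≤ p →
      ∃ C : ℝ≥0∞, C < ⊤ ∧
        ∀ lam : I → ℝ, (∀ i, 0 ≤ lam i) → ∀ k : I,
          ENNReal.ofReal (lam k) ≤
            C * (ENNReal.ofReal (sSup ((fun x => mw w x z) '' 𝒰.U k)) * μ (𝒰.U k)) *
              MeasureTheory.eLpNorm
                (fun x => (∑' i, lam i * (μ (𝒰.U i)).toReal⁻¹ *
                    (𝒰.U i).indicator (fun _ => (1 : ℝ)) x) * w x) p μ := by
  intro p hp
  have hp0 : p ≠ 0 := (zero_lt_one.trans_le hp).ne'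
  set Dm : ℝ≥0∞ := min 𝒰.measLower 1 with hDmdef
  have hDm0 : Dm ≠ 0 := (lt_min 𝒰.measLowerPos zero_lt_one).ne'
  have hDmtop : Dm ≠ ⊤ := ((min_le_right _ _).trans_lt one_lt_top).ne
  have hwz : (0:ℝ) < w z := hwpos z
  set W : ℝ≥0∞ := ENNReal.ofReal (w z) with hWdef
  have hW0 : W ≠ 0 := by simp [hWdef, hwz]
  have hWtop : W ≠ ⊤ := ofReal_ne_top
  refine ⟨W⁻¹ * Dm⁻¹, ENNReal.mul_lt_top (ENNReal.inv_lt_top.2 (pos_iff_ne_zero.2 hW0))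
    (ENNReal.inv_lt_top.2 (pos_iff_ne_zero.2 hDm0)), ?_⟩
  intro lam hlam k
  -- notation
  set M : ℝ≥0∞ := μ (𝒰.U k) with hMdef
  have hM0 : M ≠ 0 := (lt_of_lt_of_le 𝒰.measLowerPos (𝒰.lower k)).ne'
  have hMtop : M ≠ ⊤ := (𝒰.finiteMeas k).ne
  have hMtR : (0:ℝ) < M.toReal := ENNReal.toReal_pos hM0 hMtop
  set s : Set ℝ := (fun x => mw w x z) '' 𝒰.U k with hsdef
  have hUne : (𝒰.U k).Nonempty := (𝒰.interiorNonempty k).mono interior_subset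
  have hsne : s.Nonempty := hUne.image _
  -- the sup is bounded above using compactness of the closure
  have hclne : (closure (𝒰.U k)).Nonempty := hUne.closure
  obtain ⟨xm, hxm, hmin⟩ := (𝒰.relCompact k).exists_isMinOn hclne hw.continuousOn
  obtain ⟨xM, hxM, hmax⟩ := (𝒰.relCompact k).exists_isMaxOn hclne hw.continuousOn
  have hbdd : BddAbove s := by
    refine ⟨max (w xM / w z) (w z / w xm), ?_⟩
    rintro a ⟨x, hx, rfl⟩
    have hx' : x ∈ closure (𝒰.U k) := subset_closure hx
    have h1 : w x / w z ≤ w xM / w z := by gcongr; exact hmax hx'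
    have h2 : w z / w x ≤ w z / w xm := by
      gcongr
      · exact hwpos xm
      · exact hmin hx'
    exact max_le_max h1 h2
  set v : ℝ := sSup s with hvdef
  have hv_ge : ∀ x ∈ 𝒰.U k, mw w x z ≤ v := fun x hx =>
    le_csSup hbdd ⟨x, hx, rfl⟩
  have hv1 : (1:ℝ) ≤ v := by
    obtain ⟨x0, hx0⟩ := hUne
    refine le_trans ?_ (hv_ge x0 hx0)
    rcases le_total (w x0) (w z) with h | h
    · exact le_max_of_le_right ((one_le_div (hwpos x0)).2 h)
    · exact le_max_of_le_left ((one_le_div hwz).2 h)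
  have hv0 : (0:ℝ) < v := lt_of_lt_of_le zero_lt_one hv1
  set V : ℝ≥0∞ := ENNReal.ofReal v with hVdef
  have hV0 : V ≠ 0 := by simp [hVdef, hv0]
  have hVtop : V ≠ ⊤ := ofReal_ne_top
  -- the constant
  set c : ℝ := lam k * (M.toReal)⁻¹ * (w z / v) with hcdef
  have hc0 : 0 ≤ c :=
    mul_nonneg (mul_nonneg (hlam k) (inv_nonneg.2 hMtR.le)) (div_nonneg hwz.le hv0.le)
  set F : X → ℝ := fun x => (∑' i, lam i * (μ (𝒰.U i)).toReal⁻¹ *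
      (𝒰.U i).indicator (fun _ => (1 : ℝ)) x) * w x with hFdef
  have hterm_nonneg : ∀ x i, 0 ≤ lam i * (μ (𝒰.U i)).toReal⁻¹ *
      (𝒰.U i).indicator (fun _ => (1 : ℝ)) x := by
    intro x i
    have := hlam i
    have : (0:ℝ) ≤ (𝒰.U i).indicator (fun _ => (1 : ℝ)) x :=
      Set.indicator_nonneg (fun _ _ => zero_le_one) x
    positivity
  have hF_nonneg : ∀ x, 0 ≤ F x := by
    intro x
    exact mul_nonneg (tsum_nonneg (hterm_nonneg x)) (hwpos x).le
  -- pointwise lower bound on U k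
  have hFc : ∀ x ∈ 𝒰.U k, c ≤ F x := by
    intro x hx
    have hsum : Summable (fun i => lam i * (μ (𝒰.U i)).toReal⁻¹ *
        (𝒰.U i).indicator (fun _ => (1 : ℝ)) x) := by
      obtain ⟨j, hj⟩ : ∃ j, x ∈ 𝒰.U j := by
        have : x ∈ ⋃ i, 𝒰.U i := by rw [𝒰.covers]; trivial
        exact Set.mem_iUnion.1 this
      refine summable_of_finite_support ((𝒰.overlapFin j).subset ?_)
      intro i hi
      simp only [Function.mem_support] at hi
      by_contra hxi
      simp only [Set.mem_setOf_eq, Set.not_nonempty_iff_eq_empty] at hxi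
      have hxUi : x ∉ 𝒰.U i := fun hxU => (Set.eq_empty_iff_forall_notMem.1 hxi x) ⟨hxU, hj⟩
      exact hi (by simp [Set.indicator_of_notMem hxUi])
    have h1 : lam k * (M.toReal)⁻¹ ≤ ∑' i, lam i * (μ (𝒰.U i)).toReal⁻¹ *
        (𝒰.U i).indicator (fun _ => (1 : ℝ)) x := by
      have := Summable.le_tsum hsum k (fun j _ => hterm_nonneg x j)
      simpa [Set.indicator_of_mem hx, hMdef] using this
    have hwx : w z / v ≤ w x := by
      have h2 : w z / w x ≤ v := le_trans (le_max_right _ _) (hv_ge x hx)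
      rw [div_le_iff₀ hv0]
      rw [div_le_iff₀ (hwpos x)] at h2
      linarith [mul_comm v (w x)] -- w z ≤ v * w x vs w x * v
    calc c = (lam k * (M.toReal)⁻¹) * (w z / v) := rfl
      _ ≤ (lam k * (M.toReal)⁻¹) * w x :=
          mul_le_mul_of_nonneg_left hwx (mul_nonneg (hlam k) (inv_nonneg.2 hMtR.le))
      _ ≤ F x := mul_le_mul_of_nonneg_right h1 (hwpos x).le
  -- comparison of eLpNorms
  have hmono : eLpNorm ((𝒰.U k).indicator (fun _ => c)) p μ ≤ eLpNorm F p μ := by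
    refine eLpNorm_mono fun x => ?_
    by_cases hx : x ∈ 𝒰.U k
    · rw [Set.indicator_of_mem hx]
      rw [Real.norm_eq_abs, Real.norm_eq_abs, abs_of_nonneg hc0]
      exact le_trans (hFc x hx) (le_abs_self _)
    · simp [Set.indicator_of_notMem hx, norm_nonneg]
  have hind : eLpNorm ((𝒰.U k).indicator (fun _ => c)) p μ
      = (‖c‖₊ : ℝ≥0∞) * M ^ (1 / p.toReal) :=
    eLpNorm_indicator_const' (𝒰.measU k) hM0 hp0
  -- lower bound on M ^ (1/p.toReal)
  have hMrpow : Dm ≤ M ^ (1 / p.toReal) := by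
    by_cases hptop : p = ⊤
    · rw [hptop]
      simp only [ENNReal.toReal_top, _root_.div_zero, ENNReal.rpow_zero]
      exact min_le_right _ _
    · have hpt1 : (1:ℝ) ≤ p.toReal := by
        have := ENNReal.toReal_mono hptop hp
        simpa using this
      have hpt0 : (0:ℝ) < p.toReal := lt_of_lt_of_le zero_lt_one hpt1
      have ht0 : (0:ℝ) < 1 / p.toReal := by positivity
      have ht1 : 1 / p.toReal ≤ 1 := by
        rw [div_le_one hpt0]; exact hpt1
      rcases le_total M 1 with hM1 | hM1
      · calc Dm ≤ 𝒰.measLower := min_le_left _ _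
          _ ≤ M := 𝒰.lower k
          _ = M ^ (1:ℝ) := (ENNReal.rpow_one M).symm
          _ ≤ M ^ (1 / p.toReal) := ENNReal.rpow_le_rpow_of_exponent_ge hM1 ht1
      · calc Dm ≤ 1 := min_le_right _ _
          _ ≤ M ^ (1 / p.toReal) := ENNReal.one_le_rpow hM1 ht0
  -- the ENNReal value of c
  have hcE : (‖c‖₊ : ℝ≥0∞) = ENNReal.ofReal (lam k) * M⁻¹ * (W * V⁻¹) := by
    rw [← ENNReal.ofReal_coe_nnreal, coe_nnnorm, Real.norm_eq_abs, abs_of_nonneg hc0, hcdef]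
    rw [ENNReal.ofReal_mul (mul_nonneg (hlam k) (inv_nonneg.2 hMtR.le)),
      ENNReal.ofReal_mul (hlam k)]
    congr 1
    · congr 1
      rw [ENNReal.ofReal_inv_of_pos hMtR, ENNReal.ofReal_toReal hMtop]
    · rw [div_eq_mul_inv, ENNReal.ofReal_mul hwz.le, ENNReal.ofReal_inv_of_pos hv0]
  -- put everything together
  calc ENNReal.ofReal (lam k)
      = W⁻¹ * Dm⁻¹ * (V * M) * (ENNReal.ofReal (lam k) * M⁻¹ * (W * V⁻¹) * Dm) := by
        have hMc : M * M⁻¹ = 1 := ENNReal.mul_inv_cancel hM0 hMtop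
        have hVc : V * V⁻¹ = 1 := ENNReal.mul_inv_cancel hV0 hVtop
        have hWc : W⁻¹ * W = 1 := ENNReal.inv_mul_cancel hW0 hWtop
        have hDc : Dm⁻¹ * Dm = 1 := ENNReal.inv_mul_cancel hDm0 hDmtop
        have : W⁻¹ * Dm⁻¹ * (V * M) * (ENNReal.ofReal (lam k) * M⁻¹ * (W * V⁻¹) * Dm)
            = ENNReal.ofReal (lam k) * ((M * M⁻¹) * (V * V⁻¹) * (W⁻¹ * W) * (Dm⁻¹ * Dm)) := by
          ring
        rw [this, hMc, hVc, hWc, hDc]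
        simp
    _ ≤ W⁻¹ * Dm⁻¹ * (V * M) * ((‖c‖₊ : ℝ≥0∞) * M ^ (1 / p.toReal)) := by
        rw [hcE]
        exact mul_le_mul_right (mul_le_mul_right hMrpow _) _
    _ ≤ W⁻¹ * Dm⁻¹ * (V * M) * eLpNorm F p μ := by
        rw [← hind]
        exact mul_le_mul_right hmono _
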